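/- Let p ∈ [1,∞), let I be a nonempty set, and let f, g ∈ ℓ^p(I)^+. Then f ≺ g and g ≺ f hold if and only if there exists a permutation operator P on ℓ^p(I) such that g = Pf. -/

import Mathlib

set_option linter.unusedSectionVars false
set_option maxHeartbeats 1000000

open scoped ENNReal BigOperators

noncomputable section

/-- ℓᵖ(I) with real scalars. -/
abbrev Lp (I : Type*) (p : ℝ≥0∞) := lp (fun _ : I => ℝ) p

/-- The standard basis vector `e_j` of `ℓᵖ(I)`. -/
def stdVec {I : Type*} (p : ℝ≥0∞) (j : I) : Lp I p :=
  haveI := Classical.decEq I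
  lp.single p j 1

/-- A bounded operator on ℓᵖ(I) is positive if it maps the positive cone into itself. -/
def IsPos {I : Type*} {p : ℝ≥0∞} [Fact (1 ≤ p)] (A : Lp I p →L[ℝ] Lp I p) : Prop :=
  ∀ f : Lp I p, (∀ i, 0 ≤ f i) → ∀ i, 0 ≤ A f i

/-- Doubly stochastic operator on ℓᵖ(I). -/
def DoublyStochastic {I : Type*} {p : ℝ≥0∞} [Fact (1 ≤ p)]
    (A : Lp I p →L[ℝ] Lp I p) : Prop :=
  IsPos A ∧ (∀ i : I, HasSum (fun j : I => A (stdVec p j) i) 1)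
          ∧ (∀ j : I, HasSum (fun i : I => A (stdVec p j) i) 1)

/-- Doubly substochastic operator on ℓᵖ(I) (finite partial sums formulation). -/
def DoublySubstochastic {I : Type*} {p : ℝ≥0∞} [Fact (1 ≤ p)]
    (A : Lp I p →L[ℝ] Lp I p) : Prop :=
  IsPos A ∧ (∀ i : I, ∀ s : Finset I, ∑ j ∈ s, A (stdVec p j) i ≤ 1)
          ∧ (∀ j : I, ∀ s : Finset I, ∑ i ∈ s, A (stdVec p j) i ≤ 1)

/-- Increasable doubly substochastic operator on ℓᵖ(I). -/
def IncreasableDsS {I : Type*} {p : ℝ≥0∞} [Fact (1 ≤ p)]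
    (A : Lp I p →L[ℝ] Lp I p) : Prop :=
  IsPos A ∧ ∃ A₁ : Lp I p →L[ℝ] Lp I p, DoublyStochastic A₁ ∧
    ∀ i j : I, A (stdVec p j) i ≤ A₁ (stdVec p j) i

/-- Majorization: `f ≺ g`. -/
def Maj {I : Type*} {p : ℝ≥0∞} [Fact (1 ≤ p)] (f g : Lp I p) : Prop :=
  ∃ D : Lp I p →L[ℝ] Lp I p, DoublyStochastic D ∧ f = D g

/-- Weak majorization: `f ≺_w g`. -/
def MajW {I : Type*} {p : ℝ≥0∞} [Fact (1 ≤ p)] (f g : Lp I p) : Prop :=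
  ∃ D : Lp I p →L[ℝ] Lp I p, DoublySubstochastic D ∧ f = D g

/-- Submajorization: `f ≺_s g`. -/
def MajS {I : Type*} {p : ℝ≥0∞} [Fact (1 ≤ p)] (f g : Lp I p) : Prop :=
  ∃ D : Lp I p →L[ℝ] Lp I p, IncreasableDsS D ∧ f = D g

/-- Permutation operator on ℓᵖ(I). -/
def IsPermutationOp {I : Type*} {p : ℝ≥0∞} [Fact (1 ≤ p)]
    (P : Lp I p →L[ℝ] Lp I p) : Prop :=
  ∃ θ : I ≃ I, ∀ j : I, P (stdVec p j) = stdVec p (θ j)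

/-- `P` is the operator `P_θ` associated with the injection `θ : I → I`,
i.e. `P f = ∑_{k ∈ I} f(k) e_{θ(k)}`. -/
def IsPTheta {I : Type*} {p : ℝ≥0∞} [Fact (1 ≤ p)] (θ : I → I)
    (P : Lp I p →L[ℝ] Lp I p) : Prop :=
  (∀ f : Lp I p, ∀ k : I, P f (θ k) = f k) ∧
  (∀ f : Lp I p, ∀ i : I, i ∉ Set.range θ → P f i = 0)

/-- `T` preserves weak majorization on the positive cone. -/
def PreservesMajW {I : Type*} {p : ℝ≥0∞} [Fact (1 ≤ p)]
    (T : Lp I p →L[ℝ] Lp I p) : Prop :=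
  ∀ f g : Lp I p, (∀ i, 0 ≤ f i) → (∀ i, 0 ≤ g i) → MajW f g → MajW (T f) (T g)

/-- `T` preserves submajorization on the positive cone. -/
def PreservesMajS {I : Type*} {p : ℝ≥0∞} [Fact (1 ≤ p)]
    (T : Lp I p →L[ℝ] Lp I p) : Prop :=
  ∀ f g : Lp I p, (∀ i, 0 ≤ f i) → (∀ i, 0 ≤ g i) → MajS f g → MajS (T f) (T g)

end

/-! ### Auxiliary material for the proof -/

noncomputable section Aux

/-! #### Tangent line inequality for `x ^ n` -/

private lemma tangent_key {n : ℕ} {x y : ℝ} :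
    y ^ n - (x ^ n + (n : ℝ) * x ^ (n - 1) * (y - x))
      = ∑ i ∈ Finset.range n, x ^ (n - 1 - i) * ((y - x) * (y ^ i - x ^ i)) := by
  have h1 := geom_sum₂_mul y x n
  have hterm : ∀ i ∈ Finset.range n, x ^ (n - 1 - i) * x ^ i = x ^ (n - 1) := by
    intro i hi
    rw [← pow_add]
    congr 1
    have := Finset.mem_range.1 hi
    omega
  have hsum2 : ∑ i ∈ Finset.range n, x ^ (n - 1 - i) * x ^ i = (n : ℝ) * x ^ (n - 1) := by
    rw [Finset.sum_congr rfl hterm, Finset.sum_const, Finset.card_range, nsmul_eq_mul]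
  calc y ^ n - (x ^ n + (n : ℝ) * x ^ (n - 1) * (y - x))
      = (∑ i ∈ Finset.range n, y ^ i * x ^ (n - 1 - i)) * (y - x)
        - (∑ i ∈ Finset.range n, x ^ (n - 1 - i) * x ^ i) * (y - x) := by
        rw [h1, hsum2]; ring
    _ = ∑ i ∈ Finset.range n, x ^ (n - 1 - i) * ((y - x) * (y ^ i - x ^ i)) := by
        rw [Finset.sum_mul, Finset.sum_mul, ← Finset.sum_sub_distrib]
        exact Finset.sum_congr rfl fun i _ => by ring

private lemma tangent_term_nonneg {n : ℕ} {x y : ℝ} (hx : 0 ≤ x) (hy : 0 ≤ y) :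
    ∀ i ∈ Finset.range n, 0 ≤ x ^ (n - 1 - i) * ((y - x) * (y ^ i - x ^ i)) := by
  intro i _
  apply mul_nonneg (pow_nonneg hx _)
  rcases le_total x y with h | h
  · have := pow_le_pow_left₀ hx h i
    exact mul_nonneg (by linarith) (by linarith)
  · have := pow_le_pow_left₀ hy h i
    nlinarith

lemma tangent_le {n : ℕ} {x y : ℝ} (hx : 0 ≤ x) (hy : 0 ≤ y) :
    x ^ n + (n : ℝ) * x ^ (n - 1) * (y - x) ≤ y ^ n := by
  have h := tangent_key (n := n) (x := x) (y := y)
  have h2 := Finset.sum_nonneg (tangent_term_nonneg (n := n) hx hy)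
  linarith

lemma tangent_lt {n : ℕ} (hn : 2 ≤ n) {x y : ℝ} (hx : 0 ≤ x) (hy : 0 ≤ y) (hxy : x ≠ y) :
    x ^ n + (n : ℝ) * x ^ (n - 1) * (y - x) < y ^ n := by
  have h := tangent_key (n := n) (x := x) (y := y)
  have hmem : n - 1 ∈ Finset.range n := Finset.mem_range.2 (by omega)
  have hne1 : n - 1 ≠ 0 := by omega
  have hpos : 0 < x ^ (n - 1 - (n - 1)) * ((y - x) * (y ^ (n - 1) - x ^ (n - 1))) := by
    rw [Nat.sub_self, pow_zero, one_mul]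
    rcases lt_or_gt_of_ne hxy with hlt | hgt
    · have := pow_lt_pow_left₀ hlt hx hne1
      exact mul_pos (by linarith) (by linarith)
    · have := pow_lt_pow_left₀ hgt hy hne1
      exact mul_pos_of_neg_of_neg (by linarith) (by linarith)
  have h2 : 0 < ∑ i ∈ Finset.range n, x ^ (n - 1 - i) * ((y - x) * (y ^ i - x ^ i)) :=
    Finset.sum_pos' (tangent_term_nonneg hx hy) ⟨n - 1, hmem, hpos⟩
  linarith

/-! #### lp infrastructure -/

section Infra
variable {I : Type*} {p : ℝ≥0∞} [Fact (1 ≤ p)]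

lemma p_ne_zero : p ≠ 0 := (zero_lt_one.trans_le (Fact.out : 1 ≤ p)).ne'

lemma p_toReal_pos (hp : p ≠ ∞) : 0 < p.toReal :=
  ENNReal.toReal_pos p_ne_zero hp

lemma stdVec_apply_self (j : I) : stdVec p j j = 1 := by
  simp [stdVec, lp.single_apply]

lemma stdVec_apply_ne {j i : I} (h : i ≠ j) : stdVec p j i = 0 := by
  simp [stdVec, lp.single_apply, h]

lemma stdVec_nonneg (j i : I) : 0 ≤ stdVec p j i := by
  by_cases h : i = j
  · subst h; rw [stdVec_apply_self]; norm_num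
  · rw [stdVec_apply_ne h]

/-- Coordinate evaluation as a continuous linear map. -/
def evalCLM (i : I) : Lp I p →L[ℝ] ℝ :=
  LinearMap.mkContinuous
    { toFun := fun f => f i
      map_add' := fun f g => by simp
      map_smul' := fun c f => by simp } 1
    (fun f => by
      exact (by simpa using lp.norm_apply_le_norm (p_ne_zero (p := p)) f i : ‖f i‖ ≤ 1 * ‖f‖))

@[simp] lemma evalCLM_apply (i : I) (f : Lp I p) : evalCLM i f = f i := rfl

lemma single_eq_smul_stdVec (j : I) (c : ℝ) :
    (haveI := Classical.decEq I; lp.single p j c) = c • stdVec p j := by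
  classical
  refine lp.ext (funext fun i => ?_)
  rw [lp.coeFn_smul, Pi.smul_apply, smul_eq_mul]
  by_cases h : i = j
  · subst h
    rw [lp.single_apply_self, stdVec_apply_self, mul_one]
  · rw [lp.single_apply_ne _ _ _ h, stdVec_apply_ne h, mul_zero]

/-- coordinates of `A h` as a sum over the matrix entries. -/
lemma hasSum_coord (hp : p ≠ ∞) (A : Lp I p →L[ℝ] Lp I p) (h : Lp I p) (i : I) :
    HasSum (fun j => h j * A (stdVec p j) i) (A h i) := by
  classical
  have H := lp.hasSum_single hp h
  have H2 := ((evalCLM i).comp A).hasSum H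
  refine H2.congr_fun fun j => ?_
  rw [ContinuousLinearMap.comp_apply, evalCLM_apply, single_eq_smul_stdVec j (h j), map_smul,
    lp.coeFn_smul, Pi.smul_apply, smul_eq_mul]

lemma coord_le_norm (f : Lp I p) (i : I) : f i ≤ ‖f‖ :=
  le_trans (le_abs_self _) (lp.norm_apply_le_norm (p_ne_zero (p := p)) f i)

lemma summable_pow_of_memℓp (hp : p ≠ ∞) {n : ℕ} (hn : 0 < n) (hpn : p ≤ (n : ℝ≥0∞))
    (f : Lp I p) (hf : ∀ i, 0 ≤ f i) : Summable (fun i => f i ^ n) := by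
  have h1 : Memℓp (⇑f) ((n : ℕ) : ℝ≥0∞) := (lp.memℓp f).of_exponent_ge hpn
  have hnt : (0:ℝ) < (((n : ℕ) : ℝ≥0∞)).toReal := by
    rw [ENNReal.toReal_natCast]
    exact_mod_cast hn
  have h2 := h1.summable hnt
  refine h2.congr fun i => ?_
  rw [ENNReal.toReal_natCast, Real.rpow_natCast, Real.norm_of_nonneg (hf i)]

lemma memℓp_comp_equiv {σ : I ≃ I} {h : I → ℝ} (hh : Memℓp h p) (hp : p ≠ ∞) :
    Memℓp (fun i => h (σ.symm i)) p := by
  apply memℓp_gen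
  have hs := hh.summable (p_toReal_pos hp)
  exact (Equiv.summable_iff σ.symm (f := fun i => ‖h i‖ ^ p.toReal)).2 hs

/-- Permutation operator associated to `σ`: `(P f) i = f (σ.symm i)`. -/
def permCLM (p : ℝ≥0∞) [Fact (1 ≤ p)] (hp : p ≠ ∞) (σ : I ≃ I) : Lp I p →L[ℝ] Lp I p :=
  LinearMap.mkContinuous
    { toFun := fun h => (⟨fun i => h (σ.symm i), memℓp_comp_equiv (lp.memℓp h) hp⟩ : Lp I p)
      map_add' := fun h₁ h₂ => by
        refine lp.ext (funext fun i => ?_)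
        simp
        rfl
      map_smul' := fun c h => by
        refine lp.ext (funext fun i => ?_)
        simp } 1
    (fun h => by
      have hpt := p_toReal_pos (p := p) hp
      rw [one_mul]
      apply le_of_eq
      have h1 := lp.norm_rpow_eq_tsum hpt
        (⟨fun i => h (σ.symm i), memℓp_comp_equiv (lp.memℓp h) hp⟩ : Lp I p)
      have h2 := lp.norm_rpow_eq_tsum hpt h
      have h3 : (∑' i, ‖h (σ.symm i)‖ ^ p.toReal) = ∑' i, ‖h i‖ ^ p.toReal :=
        Equiv.tsum_eq σ.symm (fun i => ‖h i‖ ^ p.toReal)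
      have : ‖(⟨fun i => h (σ.symm i), memℓp_comp_equiv (lp.memℓp h) hp⟩ : Lp I p)‖ ^ p.toReal
          = ‖h‖ ^ p.toReal := by
        rw [h1, h2]; exact h3
      have hn1 : (0:ℝ) ≤ ‖(⟨fun i => h (σ.symm i), memℓp_comp_equiv (lp.memℓp h) hp⟩ : Lp I p)‖ :=
        norm_nonneg _
      have hn2 : (0:ℝ) ≤ ‖h‖ := norm_nonneg _
      exact Real.rpow_left_injOn hpt.ne' hn1 hn2 ‹_›)

@[simp] lemma permCLM_apply (hp : p ≠ ∞) (σ : I ≃ I) (h : Lp I p) (i : I) :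
    permCLM p hp σ h i = h (σ.symm i) := rfl

lemma permCLM_stdVec (hp : p ≠ ∞) (σ : I ≃ I) (j : I) :
    permCLM p hp σ (stdVec p j) = stdVec p (σ j) := by
  refine lp.ext (funext fun i => ?_)
  rw [permCLM_apply]
  by_cases h : i = σ j
  · subst h
    rw [Equiv.symm_apply_apply, stdVec_apply_self, stdVec_apply_self]
  · rw [stdVec_apply_ne h, stdVec_apply_ne]
    intro hc
    exact h (by rw [← hc, Equiv.apply_symm_apply])

lemma stdVec_hasSum_row (σ : I ≃ I) (i : I) :
    HasSum (fun j : I => stdVec p (σ j) i) 1 := by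
  classical
  refine (hasSum_ite_eq (σ.symm i) (1:ℝ)).congr_fun fun j => ?_
  by_cases h : j = σ.symm i
  · subst h
    rw [Equiv.apply_symm_apply, stdVec_apply_self, if_pos rfl]
  · rw [if_neg h, stdVec_apply_ne]
    intro hc
    exact h (by rw [hc, Equiv.symm_apply_apply])

lemma stdVec_hasSum_col (σ : I ≃ I) (j : I) :
    HasSum (fun i : I => stdVec p (σ j) i) 1 := by
  classical
  refine (hasSum_ite_eq (σ j) (1:ℝ)).congr_fun fun i => ?_
  by_cases h : i = σ j
  · subst h
    rw [stdVec_apply_self, if_pos rfl]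
  · rw [if_neg h, stdVec_apply_ne h]

lemma permCLM_doublyStochastic (hp : p ≠ ∞) (σ : I ≃ I) :
    DoublyStochastic (permCLM p hp σ) := by
  refine ⟨fun h hh i => by rw [permCLM_apply]; exact hh _, fun i => ?_, fun j => ?_⟩
  · exact (stdVec_hasSum_row σ i).congr_fun fun j => by rw [permCLM_stdVec]
  · exact (stdVec_hasSum_col σ j).congr_fun fun i => by rw [permCLM_stdVec]

/-- A permutation operator acts pointwise as the permutation. -/
lemma permOp_apply (hp : p ≠ ∞) {P : Lp I p →L[ℝ] Lp I p} {θ : I ≃ I}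
    (hP : ∀ j : I, P (stdVec p j) = stdVec p (θ j)) (h : Lp I p) (i : I) :
    P h i = h (θ.symm i) := by
  classical
  have H := hasSum_coord hp P h i
  have H' : HasSum (fun j : I => if j = θ.symm i then h (θ.symm i) else 0) (h (θ.symm i)) :=
    hasSum_ite_eq (θ.symm i) (h (θ.symm i))
  refine H.unique (H'.congr_fun fun j => ?_)
  rw [hP j]
  by_cases hj : j = θ.symm i
  · subst hj
    rw [if_pos rfl, Equiv.apply_symm_apply, stdVec_apply_self, mul_one]
  · rw [if_neg hj, stdVec_apply_ne, mul_zero]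
    intro hc
    exact hj (by rw [hc, Equiv.symm_apply_apply])

end Infra

/-! #### Analytic key lemma -/

section Key
variable {I : Type*}

lemma rowsum_hasSum_tangent {n : ℕ}
    (d : I → I → ℝ) (f g : I → ℝ)
    (hdrow : ∀ i, HasSum (fun j => d i j) 1)
    (hfd : ∀ i, HasSum (fun j => d i j * g j) (f i))
    (hSsum : ∀ i, Summable (fun j => d i j * g j ^ n)) (i : I) :
    HasSum (fun j => d i j * (g j ^ n - f i ^ n - (n:ℝ) * f i ^ (n-1) * (g j - f i)))
      ((∑' j, d i j * g j ^ n) - f i ^ n) := by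
  have h1 : HasSum (fun j => d i j * g j ^ n) (∑' j, d i j * g j ^ n) := (hSsum i).hasSum
  have h2 : HasSum (fun j => d i j * f i ^ n) (f i ^ n) := by
    simpa using (hdrow i).mul_right (f i ^ n)
  have h3 : HasSum (fun j => d i j * f i) (f i) := by
    simpa using (hdrow i).mul_right (f i)
  have h4 : HasSum (fun j => (n:ℝ) * f i ^ (n-1) * (d i j * g j - d i j * f i)) 0 := by
    have := ((hfd i).sub h3).mul_left ((n:ℝ) * f i ^ (n-1))
    simpa using this
  have h5 := (h1.sub h2).sub h4
  rw [sub_zero] at h5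
  refine h5.congr_fun fun j => ?_
  ring

lemma colsum_ofReal {d : I → I → ℝ} (hd0 : ∀ i j, 0 ≤ d i j)
    (hdcol : ∀ j, HasSum (fun i => d i j) 1) (j : I) :
    ∑' i, ENNReal.ofReal (d i j) = 1 := by
  rw [← ENNReal.ofReal_tsum_of_nonneg (fun i => hd0 i j) (hdcol j).summable, (hdcol j).tsum_eq,
    ENNReal.ofReal_one]

lemma fubini_step {n : ℕ} {d : I → I → ℝ} {g : I → ℝ} (hg : ∀ j, 0 ≤ g j)
    (hd0 : ∀ i j, 0 ≤ d i j) (hdcol : ∀ j, HasSum (fun i => d i j) 1)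
    (hSsum : ∀ i, Summable (fun j => d i j * g j ^ n)) :
    ∑' i, ENNReal.ofReal (∑' j, d i j * g j ^ n) = ∑' j, ENNReal.ofReal (g j ^ n) := by
  calc ∑' i, ENNReal.ofReal (∑' j, d i j * g j ^ n)
      = ∑' i, ∑' j, ENNReal.ofReal (d i j) * ENNReal.ofReal (g j ^ n) := by
        refine tsum_congr fun i => ?_
        rw [ENNReal.ofReal_tsum_of_nonneg
          (fun j => mul_nonneg (hd0 i j) (pow_nonneg (hg j) n)) (hSsum i)]
        exact tsum_congr fun j => ENNReal.ofReal_mul (hd0 i j)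
    _ = ∑' j, ∑' i, ENNReal.ofReal (d i j) * ENNReal.ofReal (g j ^ n) := ENNReal.tsum_comm
    _ = ∑' j, (∑' i, ENNReal.ofReal (d i j)) * ENNReal.ofReal (g j ^ n) := by
        refine tsum_congr fun j => ?_
        rw [ENNReal.tsum_mul_right]
    _ = ∑' j, ENNReal.ofReal (g j ^ n) := by
        refine tsum_congr fun j => ?_
        rw [colsum_ofReal hd0 hdcol j, one_mul]

lemma key_raw {n : ℕ} (hn : 2 ≤ n) (d e : I → I → ℝ) (f g : I → ℝ)
    (hf : ∀ i, 0 ≤ f i) (hg : ∀ j, 0 ≤ g j)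
    (hd0 : ∀ i j, 0 ≤ d i j) (he0 : ∀ j i, 0 ≤ e j i)
    (hdrow : ∀ i, HasSum (fun j => d i j) 1) (hdcol : ∀ j, HasSum (fun i => d i j) 1)
    (herow : ∀ j, HasSum (fun i => e j i) 1) (hecol : ∀ i, HasSum (fun j => e j i) 1)
    (hfd : ∀ i, HasSum (fun j => d i j * g j) (f i))
    (hge : ∀ j, HasSum (fun i => e j i * f i) (g j))
    (hfn : Summable (fun i => f i ^ n)) (hgn : Summable (fun j => g j ^ n))
    {Cf Cg : ℝ} (hCf : ∀ i, f i ≤ Cf) (hCg : ∀ j, g j ≤ Cg) :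
    ∀ i j, d i j ≠ 0 → f i = g j := by
  have hSd : ∀ i, Summable (fun j => d i j * g j ^ n) := fun i =>
    Summable.of_nonneg_of_le (fun j => mul_nonneg (hd0 i j) (pow_nonneg (hg j) n))
      (fun j => mul_le_mul_of_nonneg_left (pow_le_pow_left₀ (hg j) (hCg j) n) (hd0 i j))
      ((hdrow i).summable.mul_right (Cg ^ n))
  have hSe : ∀ j, Summable (fun i => e j i * f i ^ n) := fun j =>
    Summable.of_nonneg_of_le (fun i => mul_nonneg (he0 j i) (pow_nonneg (hf i) n))
      (fun i => mul_le_mul_of_nonneg_left (pow_le_pow_left₀ (hf i) (hCf i) n) (he0 j i))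
      ((herow j).summable.mul_right (Cf ^ n))
  have htan := rowsum_hasSum_tangent d f g hdrow hfd hSd
  have htane := rowsum_hasSum_tangent e g f herow hge hSe
  have htne : ∀ i j, 0 ≤ d i j * (g j ^ n - f i ^ n - (n:ℝ) * f i ^ (n-1) * (g j - f i)) :=
    fun i j => mul_nonneg (hd0 i j)
      (by have := tangent_le (n := n) (hf i) (hg j); linarith)
  have htnee : ∀ j i, 0 ≤ e j i * (f i ^ n - g j ^ n - (n:ℝ) * g j ^ (n-1) * (f i - g j)) :=
    fun j i => mul_nonneg (he0 j i)
      (by have := tangent_le (n := n) (hg j) (hf i); linarith)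
  have hfleS : ∀ i, f i ^ n ≤ ∑' j, d i j * g j ^ n := by
    intro i
    have h0 := (htan i).nonneg (fun j => htne i j)
    linarith
  have hgleT : ∀ j, g j ^ n ≤ ∑' i, e j i * f i ^ n := by
    intro j
    have h0 := (htane j).nonneg (fun i => htnee j i)
    linarith
  have hfub_d := fubini_step hg hd0 hdcol hSd
  have hfub_e := fubini_step hf he0 hecol hSe
  set Φf := ∑' i, ENNReal.ofReal (f i ^ n) with hΦf
  set Φg := ∑' j, ENNReal.ofReal (g j ^ n) with hΦg
  have hΦfg : Φf ≤ ∑' i, ENNReal.ofReal (∑' j, d i j * g j ^ n) :=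
    ENNReal.tsum_le_tsum (fun i => ENNReal.ofReal_le_ofReal (hfleS i))
  have hΦgf : Φg ≤ ∑' j, ENNReal.ofReal (∑' i, e j i * f i ^ n) :=
    ENNReal.tsum_le_tsum (fun j => ENNReal.ofReal_le_ofReal (hgleT j))
  have hΦfne : Φf ≠ ⊤ := by
    rw [hΦf, ← ENNReal.ofReal_tsum_of_nonneg (fun i => pow_nonneg (hf i) n) hfn]
    exact ENNReal.ofReal_ne_top
  have hEq : Φf = ∑' i, ENNReal.ofReal (∑' j, d i j * g j ^ n) := by
    refine le_antisymm hΦfg ?_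
    rw [hfub_d]
    exact hΦgf.trans (le_of_eq hfub_e)
  have hpt : ∀ i, f i ^ n = ∑' j, d i j * g j ^ n := by
    intro i
    by_contra hne
    have hlt : ENNReal.ofReal (f i ^ n) < ENNReal.ofReal (∑' j, d i j * g j ^ n) :=
      (ENNReal.ofReal_lt_ofReal_iff_of_nonneg (pow_nonneg (hf i) n)).2
        (lt_of_le_of_ne (hfleS i) hne)
    have := ENNReal.tsum_lt_tsum hΦfne
      (fun i' => ENNReal.ofReal_le_ofReal (hfleS i')) hlt
    rw [← hΦf, ← hEq] at this
    exact lt_irrefl _ this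
  intro i j hdij
  have h0 : HasSum (fun j => d i j * (g j ^ n - f i ^ n - (n:ℝ) * f i ^ (n-1) * (g j - f i))) 0 := by
    have := htan i
    rwa [← hpt i, sub_self] at this
  have hterm_le : d i j * (g j ^ n - f i ^ n - (n:ℝ) * f i ^ (n-1) * (g j - f i)) ≤ 0 :=
    le_hasSum h0 j (fun j' _ => htne i j')
  have hterm0 : d i j * (g j ^ n - f i ^ n - (n:ℝ) * f i ^ (n-1) * (g j - f i)) = 0 :=
    le_antisymm hterm_le (htne i j)
  have hbr : g j ^ n - f i ^ n - (n:ℝ) * f i ^ (n-1) * (g j - f i) = 0 := by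
    rcases mul_eq_zero.1 hterm0 with h | h
    · exact absurd h hdij
    · exact h
  by_contra hne
  have := tangent_lt hn (hf i) (hg j) hne
  linarith

end Key


/-! #### Counting / fiber equivalence -/

section Count
variable {I : Type*}

lemma block_finite_card {d : I → I → ℝ} (hd0 : ∀ i j, 0 ≤ d i j)
    (hdrow : ∀ i, HasSum (fun j => d i j) 1) (hdcol : ∀ j, HasSum (fun i => d i j) 1)
    {A B : Set I} (hAB : ∀ i j, d i j ≠ 0 → (i ∈ A ↔ j ∈ B)) (hA : A.Finite) :
    B.Finite ∧ B.ncard ≤ A.ncard := by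
  classical
  have hbound : ∀ S : Finset I, ↑S ⊆ B → S.card ≤ hA.toFinset.card := by
    intro S hS
    have hcol1 : ∀ j ∈ S, ∑ i ∈ hA.toFinset, d i j = 1 := by
      intro j hj
      refine ((hasSum_sum_of_ne_finset_zero ?_).unique (hdcol j))
      intro i hi
      by_contra hne
      exact hi (hA.mem_toFinset.2 ((hAB i j hne).2 (hS hj)))
    have hreal : (S.card : ℝ) ≤ (hA.toFinset.card : ℝ) := by
      calc (S.card : ℝ) = ∑ _j ∈ S, (1:ℝ) := by simp
        _ = ∑ j ∈ S, ∑ i ∈ hA.toFinset, d i j :=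
            Finset.sum_congr rfl (fun j hj => (hcol1 j hj).symm)
        _ = ∑ i ∈ hA.toFinset, ∑ j ∈ S, d i j := Finset.sum_comm
        _ ≤ ∑ _i ∈ hA.toFinset, (1:ℝ) :=
            Finset.sum_le_sum (fun i _ => sum_le_hasSum S (fun j _ => hd0 i j) (hdrow i))
        _ = hA.toFinset.card := by simp
    exact_mod_cast hreal
  have hBfin : B.Finite := by
    by_contra hBinf
    obtain ⟨S, hSB, hScard⟩ :=
      Set.Infinite.exists_subset_card_eq hBinf (hA.toFinset.card + 1)
    have := hbound S hSB
    omega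
  refine ⟨hBfin, ?_⟩
  have h2 := hbound hBfin.toFinset (by simp)
  rwa [Set.ncard_eq_toFinset_card B hBfin, Set.ncard_eq_toFinset_card A hA]

lemma block_infinite_le {d : I → I → ℝ}
    (hdrow : ∀ i, HasSum (fun j => d i j) 1) (hdcol : ∀ j, HasSum (fun i => d i j) 1)
    {A B : Set I} (hAB : ∀ i j, d i j ≠ 0 → (i ∈ A ↔ j ∈ B)) (hA : A.Infinite) :
    Cardinal.mk B ≤ Cardinal.mk A := by
  haveI := hA.to_subtype
  have hcover : B ⊆ ⋃ i ∈ A, Function.support (d i) := by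
    intro j hj
    have hex : ∃ i, d i j ≠ 0 := by
      by_contra hno
      push_neg at hno
      have hz : HasSum (fun i => d i j) 0 := by
        refine hasSum_zero.congr_fun fun i => ?_
        rw [hno i]
      exact (one_ne_zero : (1:ℝ) ≠ 0) ((hdcol j).unique hz)
    obtain ⟨i, hi⟩ := hex
    exact Set.mem_biUnion ((hAB i j hi).2 hj) hi
  calc Cardinal.mk B ≤ Cardinal.mk (⋃ i ∈ A, Function.support (d i)) :=
        Cardinal.mk_le_mk_of_subset hcover
    _ ≤ Cardinal.mk A * ⨆ i : A, Cardinal.mk (Function.support (d i.1)) :=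
        Cardinal.mk_biUnion_le _ _
    _ ≤ Cardinal.mk A * Cardinal.aleph0 := by
        refine mul_le_mul_right (ciSup_le' fun i => ?_) _
        have hc : (Function.support (d i.1)).Countable := (hdrow i.1).summable.countable_support
        exact @Cardinal.mk_le_aleph0 _ hc.to_subtype
    _ = Cardinal.mk A := by
        rw [Cardinal.mul_eq_max (Cardinal.aleph0_le_mk A) le_rfl]
        exact max_eq_left (Cardinal.aleph0_le_mk A)

lemma fiber_equiv_of_key {d : I → I → ℝ} {f g : I → ℝ} (hd0 : ∀ i j, 0 ≤ d i j)
    (hdrow : ∀ i, HasSum (fun j => d i j) 1) (hdcol : ∀ j, HasSum (fun i => d i j) 1)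
    (hK : ∀ i j, d i j ≠ 0 → f i = g j) (t : ℝ) :
    Nonempty ({a // f a = t} ≃ {b // g b = t}) := by
  classical
  set A : Set I := {a | f a = t} with hA
  set B : Set I := {b | g b = t} with hB
  set dT : I → I → ℝ := fun j i => d i j with hdT
  have hAB : ∀ i j, d i j ≠ 0 → (i ∈ A ↔ j ∈ B) := by
    intro i j hne
    have := hK i j hne
    simp only [hA, hB, Set.mem_setOf_eq, this]
  have hABT : ∀ j i, dT j i ≠ 0 → (j ∈ B ↔ i ∈ A) := by
    intro j i hne
    exact (hAB i j hne).symm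
  have e1 : {a // f a = t} ≃ A := Equiv.subtypeEquivRight (fun a => Iff.rfl)
  have e2 : {b // g b = t} ≃ B := Equiv.subtypeEquivRight (fun b => Iff.rfl)
  by_cases hAfin : A.Finite
  · obtain ⟨hBfin, hle⟩ := block_finite_card hd0 hdrow hdcol hAB hAfin
    obtain ⟨hAfin', hle'⟩ := block_finite_card (fun j i => hd0 i j)
      hdcol hdrow hABT hBfin
    have hcard : hAfin.toFinset.card = hBfin.toFinset.card := by
      have h1 : A.ncard = hAfin.toFinset.card := Set.ncard_eq_toFinset_card A hAfin
      have h2 : B.ncard = hBfin.toFinset.card := Set.ncard_eq_toFinset_card B hBfin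
      omega
    have e3 : (hAfin.toFinset : Finset I) ≃ hBfin.toFinset := Finset.equivOfCardEq hcard
    have e4 : A ≃ hAfin.toFinset := Equiv.subtypeEquivRight (fun a => (hAfin.mem_toFinset).symm)
    have e5 : B ≃ hBfin.toFinset := Equiv.subtypeEquivRight (fun b => (hBfin.mem_toFinset).symm)
    exact ⟨e1.trans (e4.trans (e3.trans (e5.symm.trans e2.symm)))⟩
  · have hAinf : A.Infinite := hAfin
    have hBinf : B.Infinite := by
      intro hBfin
      obtain ⟨hAfin', _⟩ := block_finite_card (fun j i => hd0 i j) hdcol hdrow hABT hBfin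
      exact hAfin hAfin'
    have hle1 : Cardinal.mk B ≤ Cardinal.mk A := block_infinite_le hdrow hdcol hAB hAinf
    have hle2 : Cardinal.mk A ≤ Cardinal.mk B :=
      block_infinite_le (d := dT) hdcol hdrow hABT hBinf
    obtain ⟨e⟩ := Cardinal.eq.1 (le_antisymm hle2 hle1)
    exact ⟨e1.trans (e.trans e2.symm)⟩

lemma level_finite {h : I → ℝ} (hs : Summable h) (hh : ∀ i, 0 ≤ h i) {t : ℝ} (ht : 0 < t) :
    {a | h a = t}.Finite := by
  have hev : ∀ᶠ a in Filter.cofinite, h a < t :=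
    hs.tendsto_cofinite_zero (Iio_mem_nhds ht)
  have hfin := Filter.eventually_cofinite.mp hev
  refine hfin.subset fun a ha => ?_
  simp only [Set.mem_setOf_eq] at ha ⊢
  rw [ha]
  exact lt_irrefl t

end Count

end Aux

theorem stmt_6 {I : Type*} [Nonempty I] (p : ℝ≥0∞) [Fact (1 ≤ p)] (hp : p ≠ ∞)
    (f g : Lp I p) (hf : ∀ i, 0 ≤ f i) (hg : ∀ i, 0 ≤ g i) :
    (Maj f g ∧ Maj g f) ↔
      ∃ P : Lp I p →L[ℝ] Lp I p, IsPermutationOp P ∧ g = P f := by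
  constructor
  · rintro ⟨⟨D, hD, hfD⟩, ⟨E, hE, hgE⟩⟩
    classical
    set n : ℕ := max 2 ⌈p.toReal⌉₊ with hn_def
    have hn2 : 2 ≤ n := le_max_left _ _
    have hn0 : 0 < n := by omega
    have hpn : p ≤ (n : ℝ≥0∞) := by
      have h1 : p.toReal ≤ (n : ℝ) := by
        calc p.toReal ≤ (⌈p.toReal⌉₊ : ℝ) := Nat.le_ceil _
          _ ≤ (n : ℝ) := by exact_mod_cast le_max_right 2 ⌈p.toReal⌉₊
      calc p = ENNReal.ofReal p.toReal := (ENNReal.ofReal_toReal hp).symm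
        _ ≤ ENNReal.ofReal (n : ℝ) := ENNReal.ofReal_le_ofReal h1
        _ = (n : ℝ≥0∞) := ENNReal.ofReal_natCast n
    set d : I → I → ℝ := fun i j => D (stdVec p j) i with hd_def
    set e : I → I → ℝ := fun j i => E (stdVec p i) j with he_def
    have hd0 : ∀ i j, 0 ≤ d i j := fun i j => hD.1 (stdVec p j) (stdVec_nonneg j) i
    have he0 : ∀ j i, 0 ≤ e j i := fun j i => hE.1 (stdVec p i) (stdVec_nonneg i) j
    have hdrow : ∀ i, HasSum (fun j => d i j) 1 := hD.2.1
    have hdcol : ∀ j, HasSum (fun i => d i j) 1 := hD.2.2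
    have herow : ∀ j, HasSum (fun i => e j i) 1 := fun j => hE.2.1 j
    have hecol : ∀ i, HasSum (fun j => e j i) 1 := fun i => hE.2.2 i
    have hfd : ∀ i, HasSum (fun j => d i j * g j) (f i) := by
      intro i
      have H := hasSum_coord hp D g i
      have hv : (D g : Lp I p) i = f i := by rw [← hfD]
      rw [hv] at H
      exact H.congr_fun fun j => mul_comm _ _
    have hge : ∀ j, HasSum (fun i => e j i * f i) (g j) := by
      intro j
      have H := hasSum_coord hp E f j
      have hv : (E f : Lp I p) j = g j := by rw [← hgE]
      rw [hv] at H
      exact H.congr_fun fun i => mul_comm _ _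
    have hfn := summable_pow_of_memℓp hp hn0 hpn f hf
    have hgn := summable_pow_of_memℓp hp hn0 hpn g hg
    have hK : ∀ i j, d i j ≠ 0 → (f : I → ℝ) i = g j :=
      key_raw hn2 d e (⇑f) (⇑g) hf hg hd0 he0 hdrow hdcol herow hecol hfd hge hfn hgn
        (fun i => coord_le_norm f i) (fun j => coord_le_norm g j)
    have hfib : ∀ t : ℝ, Nonempty ({a // (f : I → ℝ) a = t} ≃ {b // (g : I → ℝ) b = t}) :=
      fun t => fiber_equiv_of_key hd0 hdrow hdcol hK t
    set θ : I ≃ I := Equiv.ofFiberEquiv (f := (⇑f : I → ℝ)) (g := (⇑g : I → ℝ))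
      (fun t => (hfib t).some) with hθ
    have hθmap : ∀ a, (g : I → ℝ) (θ a) = f a := fun a => Equiv.ofFiberEquiv_map _ a
    refine ⟨permCLM p hp θ, ⟨θ, permCLM_stdVec hp θ⟩, ?_⟩
    refine lp.ext (funext fun i => ?_)
    rw [permCLM_apply]
    have := hθmap (θ.symm i)
    rwa [Equiv.apply_symm_apply] at this
  · rintro ⟨P, ⟨θ, hPθ⟩, hgPf⟩
    have hPapp : ∀ h : Lp I p, ∀ i, P h i = h (θ.symm i) := permOp_apply hp hPθ
    have hDS : DoublyStochastic P := by
      refine ⟨fun h hh i => by rw [hPapp]; exact hh _, fun i => ?_, fun j => ?_⟩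
      · exact (stdVec_hasSum_row θ i).congr_fun fun j => by rw [hPθ]
      · exact (stdVec_hasSum_col θ j).congr_fun fun i => by rw [hPθ]
    refine ⟨⟨permCLM p hp θ.symm, permCLM_doublyStochastic hp θ.symm, ?_⟩, ⟨P, hDS, hgPf⟩⟩
    refine lp.ext (funext fun i => ?_)
    rw [permCLM_apply, Equiv.symm_symm]
    have h1 : (P f : Lp I p) (θ i) = f i := by rw [hPapp, Equiv.symm_apply_apply]
    have h2 : (g : I → ℝ) (θ i) = (P f : Lp I p) (θ i) := by rw [hgPf]
    rw [h2, h1]
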